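/- Let d_0, d_1, …, d_n be positive reals, let M : {1,…,n} → ℝ be any function, and for 0 ≤ i < j ≤ n define s(i,j) = Σ_{k=i+1}^{j-1} d_k + max_{i ≤ k ≤ j-1} d_k and U(i,j) = s(i,j) + d_j. Fix 1 ≤ i < n and define Q_i = { j : i < j ≤ n and for every k with i < k < j, M(k) > M(j) } (the strict running minima of M to the right of i). Then min_{i < j ≤ n} max( M(j), U(i,j) ) = min_{j ∈ Q_i} max( M(j), U(i,j) ). -/
import Mathlib


/-- `segSum d i j = Σ_{k=i+1}^{j-1} d_k`. -/
noncomputable def segSum (d : ℕ → ℝ) (i j : ℕ) : ℝ := ∑ k ∈ Finset.Ioo i j, d k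

/-- `segMax d i j = max_{i ≤ k ≤ j-1} d_k` (junk value `0` when `j ≤ i`). -/
noncomputable def segMax (d : ℕ → ℝ) (i j : ℕ) : ℝ :=
  if h : i < j then (Finset.Ico i j).sup' (Finset.nonempty_Ico.mpr h) d else 0

/-- `s(i,j) = Σ_{k=i+1}^{j-1} d_k + max_{i ≤ k ≤ j-1} d_k`. -/
noncomputable def sfun (d : ℕ → ℝ) (i j : ℕ) : ℝ := segSum d i j + segMax d i j

/-- `U(i,j) = s(i,j) + d_j`. -/
noncomputable def U (d : ℕ → ℝ) (i j : ℕ) : ℝ := sfun d i j + d j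

/-- `U d i ·` is monotone on `(i, n]` when `d` is positive on `[0, n]`. -/
lemma U_mono (n : ℕ) (d : ℕ → ℝ) (hd : ∀ k ≤ n, 0 < d k) (i j j' : ℕ)
    (hij' : i < j') (hj'j : j' ≤ j) (hjn : j ≤ n) : U d i j' ≤ U d i j := by
  rcases eq_or_lt_of_le hj'j with rfl | hlt
  · exact le_refl _
  have hij : i < j := lt_of_lt_of_le hij' hj'j
  have hsum : segSum d i j' + d j' ≤ segSum d i j := by
    have hmem : j' ∉ Finset.Ioo i j' := by simp
    have : segSum d i j' + d j' = ∑ k ∈ insert j' (Finset.Ioo i j'), d k := by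
      rw [Finset.sum_insert hmem, segSum]; ring
    rw [this, segSum]
    apply Finset.sum_le_sum_of_subset_of_nonneg
    · intro k hk
      simp only [Finset.mem_insert, Finset.mem_Ioo] at hk ⊢
      rcases hk with rfl | hk
      · exact ⟨hij', hlt⟩
      · exact ⟨hk.1, hk.2.trans hlt⟩
    · intro k hk _
      exact (hd k (le_of_lt (lt_of_lt_of_le (Finset.mem_Ioo.mp hk).2 hjn))).le
  have hmax : segMax d i j' ≤ segMax d i j := by
    rw [segMax, segMax, dif_pos hij', dif_pos hij]
    apply Finset.sup'_le
    intro k hk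
    apply Finset.le_sup'
    simp only [Finset.mem_Ico] at hk ⊢
    exact ⟨hk.1, hk.2.trans hlt⟩
  have hdj : 0 < d j := hd j hjn
  simp only [U, sfun]
  linarith

/-- Equation (27)/Lemma 3: the minimum of `j ↦ max(M(j), U(i,j))` over `i < j ≤ n`
equals its minimum over the strict running minima
`Q_i = { j | i < j ≤ n ∧ ∀ k, i < k < j → M(k) > M(j) }`. -/
theorem min_over_queue_eq (n : ℕ) (d : ℕ → ℝ) (hd : ∀ k ≤ n, 0 < d k)
    (M : ℕ → ℝ) (i : ℕ) (hi : 1 ≤ i) (hin : i < n) :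
    sInf {x : ℝ | ∃ j, i < j ∧ j ≤ n ∧ x = max (M j) (U d i j)} =
    sInf {x : ℝ | ∃ j, i < j ∧ j ≤ n ∧ (∀ k, i < k → k < j → M j < M k) ∧
      x = max (M j) (U d i j)} := by
  classical
  set A := {x : ℝ | ∃ j, i < j ∧ j ≤ n ∧ x = max (M j) (U d i j)} with hA
  set B := {x : ℝ | ∃ j, i < j ∧ j ≤ n ∧ (∀ k, i < k → k < j → M j < M k) ∧
      x = max (M j) (U d i j)} with hB
  have hBA : B ⊆ A := by
    rintro x ⟨j, h1, h2, _, h4⟩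
    exact ⟨j, h1, h2, h4⟩
  have hAfin : A.Finite := by
    apply Set.Finite.subset (Set.finite_Ioc i n |>.image (fun j => max (M j) (U d i j)))
    rintro x ⟨j, h1, h2, h4⟩
    exact ⟨j, ⟨h1, h2⟩, h4.symm⟩
  have hAbdd : BddBelow A := hAfin.bddBelow
  have hBbdd : BddBelow B := hAbdd.mono hBA
  have hAne : A.Nonempty := ⟨_, i + 1, Nat.lt_succ_self i, hin, rfl⟩
  have hBne : B.Nonempty := by
    refine ⟨_, i + 1, Nat.lt_succ_self i, hin, ?_, rfl⟩
    intro k hk hk'; omega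
  apply le_antisymm
  · exact csInf_le_csInf hAbdd hBne hBA
  · apply le_csInf hAne
    rintro x ⟨j, h1, h2, rfl⟩
    -- take `j'` the least-index argmin of `M` over `(i, j]`; it lies in the queue
    have hSne : (Finset.Ioc i j).Nonempty := ⟨j, Finset.mem_Ioc.mpr ⟨h1, le_refl j⟩⟩
    set c := (Finset.Ioc i j).inf' hSne M with hc
    obtain ⟨k0, hk0mem, hk0⟩ := Finset.exists_mem_eq_inf' hSne M
    set S' := (Finset.Ioc i j).filter (fun k => M k = c) with hS'
    have hS'ne : S'.Nonempty := ⟨k0, Finset.mem_filter.mpr ⟨hk0mem, hk0.symm⟩⟩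
    set j' := S'.min' hS'ne with hj'
    have hj'mem : j' ∈ S' := S'.min'_mem hS'ne
    obtain ⟨hj'Ioc, hMj'⟩ := Finset.mem_filter.mp hj'mem
    obtain ⟨hij', hj'j⟩ := Finset.mem_Ioc.mp hj'Ioc
    have hMle : M j' ≤ M j := by
      rw [hMj']; exact Finset.inf'_le M (Finset.mem_Ioc.mpr ⟨h1, le_refl j⟩)
    have hUle : U d i j' ≤ U d i j := U_mono n d hd i j j' hij' hj'j h2
    have hQ : ∀ k, i < k → k < j' → M j' < M k := by
      intro k hik hkj'
      have hkmem : k ∈ Finset.Ioc i j :=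
        Finset.mem_Ioc.mpr ⟨hik, le_of_lt (lt_of_lt_of_le hkj' hj'j)⟩
      have hck : c ≤ M k := Finset.inf'_le M hkmem
      rcases eq_or_lt_of_le hck with heq | hlt
      · exfalso
        have : k ∈ S' := Finset.mem_filter.mpr ⟨hkmem, heq.symm⟩
        exact absurd (S'.min'_le k this) (not_le.mpr hkj')
      · rw [hMj']; exact hlt
    have hmemB : max (M j') (U d i j') ∈ B :=
      ⟨j', hij', hj'j.trans h2, hQ, rfl⟩
    calc sInf B ≤ max (M j') (U d i j') := csInf_le hBbdd hmemB
      _ ≤ max (M j) (U d i j) := max_le_max hMle hUle
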